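/- With all parameters other than ρ fixed, the downlink coverage probability is nonincreasing in the broadcast radius ρ: if 0 < ρ₁ ≤ ρ₂ then C_DL computed with ρ₂ is at most C_DL computed with ρ₁. (A larger vehicular safety-message range degrades downlink coverage; the key step is that for each x, r the sum K₂(x) + K₃(x) is nondecreasing in ρ because the map s ↦ 2μs + 2μ∫ₛ^∞ f(u) du is nondecreasing whenever 0 ≤ f ≤ 1.) -/

import Mathlib

open MeasureTheory Real Set Filter

noncomputable def A (rho mu : ℝ) : ℝ :=
  ∫ u in (0:ℝ)..rho, (1 - Real.exp (-2 * mu * Real.sqrt (rho ^ 2 - u ^ 2)))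

noncomputable def P_SL (lamL mu rho : ℝ) : ℝ := 1 - Real.exp (-2 * lamL * A rho mu)

noncomputable def P_DL (lamL mu rho : ℝ) : ℝ := Real.exp (-2 * lamL * A rho mu)

noncomputable def K1 (tau alpha x : ℝ) : ℝ :=
  x ^ 2 + 2 * ∫ r in Set.Ioi x,
    tau * x ^ alpha * r ^ (1 - alpha) / (1 + tau * x ^ alpha * r ^ (-alpha))

noncomputable def K2 (mu rho alpha eta tau x : ℝ) : ℝ :=
  ∫ r in (0:ℝ)..rho,
    (1 - Real.exp (-2 * mu * Real.sqrt (rho ^ 2 - r ^ 2)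
      - 2 * mu * ∫ u in Set.Ioi (Real.sqrt (rho ^ 2 - r ^ 2)),
          tau * x ^ alpha * eta * (r ^ 2 + u ^ 2) ^ (-(alpha / 2)) /
            (1 + tau * x ^ alpha * eta * (r ^ 2 + u ^ 2) ^ (-(alpha / 2)))))

noncomputable def K3 (mu rho alpha eta tau x : ℝ) : ℝ :=
  ∫ r in Set.Ioi rho,
    (1 - Real.exp (-2 * mu * ∫ u in Set.Ioi (0:ℝ),
        tau * x ^ alpha * eta * (r ^ 2 + u ^ 2) ^ (-(alpha / 2)) /
          (1 + tau * x ^ alpha * eta * (r ^ 2 + u ^ 2) ^ (-(alpha / 2)))))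

noncomputable def C_DL (lamB lamL mu rho alpha eta tau : ℝ) : ℝ :=
  ∫ x in Set.Ioi (0:ℝ),
    2 * Real.pi * lamB * x *
      Real.exp (-(Real.pi * lamB * K1 tau alpha x) - 2 * lamL * K2 mu rho alpha eta tau x
        - 2 * lamL * K3 mu rho alpha eta tau x)

noncomputable def phi (alpha eta tau x r u : ℝ) : ℝ :=
  tau * x ^ alpha * eta * (r ^ 2 + u ^ 2) ^ (-(alpha / 2)) /
    (1 + tau * x ^ alpha * eta * (r ^ 2 + u ^ 2) ^ (-(alpha / 2)))

lemma num_nonneg {alpha eta tau x : ℝ} (heta : 0 < eta) (htau : 0 < tau) (hx : 0 < x)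
    (r u : ℝ) : 0 ≤ tau * x ^ alpha * eta * (r ^ 2 + u ^ 2) ^ (-(alpha / 2)) := by
  have h1 : (0:ℝ) < x ^ alpha := Real.rpow_pos_of_pos hx _
  have h2 : (0:ℝ) ≤ (r ^ 2 + u ^ 2) ^ (-(alpha / 2)) := Real.rpow_nonneg (by positivity) _
  positivity

lemma phi_nonneg {alpha eta tau x : ℝ} (heta : 0 < eta) (htau : 0 < tau) (hx : 0 < x)
    (r u : ℝ) : 0 ≤ phi alpha eta tau x r u := by
  have h := num_nonneg (alpha := alpha) heta htau hx r u
  unfold phi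
  positivity

lemma phi_le_one {alpha eta tau x : ℝ} (heta : 0 < eta) (htau : 0 < tau) (hx : 0 < x)
    (r u : ℝ) : phi alpha eta tau x r u ≤ 1 := by
  have h := num_nonneg (alpha := alpha) heta htau hx r u
  unfold phi
  rw [div_le_one (by linarith)]
  linarith

lemma phi_le_num {alpha eta tau x : ℝ} (heta : 0 < eta) (htau : 0 < tau) (hx : 0 < x)
    (r u : ℝ) :
    phi alpha eta tau x r u ≤ tau * x ^ alpha * eta * (r ^ 2 + u ^ 2) ^ (-(alpha / 2)) := by
  have h := num_nonneg (alpha := alpha) heta htau hx r u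
  exact div_le_self h (by linarith)

lemma measurable_phi_all (alpha eta tau : ℝ) :
    Measurable (fun p : (ℝ × ℝ) × ℝ => phi alpha eta tau p.1.1 p.1.2 p.2) := by
  unfold phi
  have hnum : Measurable (fun p : (ℝ × ℝ) × ℝ =>
      tau * p.1.1 ^ alpha * eta * (p.1.2 ^ 2 + p.2 ^ 2) ^ (-(alpha / 2))) :=
    (((measurable_const.mul ((measurable_fst.fst).pow_const alpha)).mul
      measurable_const).mul
      (((measurable_fst.snd.pow_const 2).add (measurable_snd.pow_const 2)).pow_const _))
  exact hnum.div (measurable_const.add hnum)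

lemma measurable_phi (alpha eta tau x : ℝ) :
    Measurable (fun p : ℝ × ℝ => phi alpha eta tau x p.1 p.2) :=
  (measurable_phi_all alpha eta tau).comp
    ((measurable_const.prodMk measurable_fst).prodMk measurable_snd)

lemma measurable_phi_u (alpha eta tau x r : ℝ) :
    Measurable (fun u => phi alpha eta tau x r u) := by
  have := (measurable_phi alpha eta tau x).comp
    ((measurable_const (a := r)).prodMk measurable_id)
  exact this

lemma sq_rpow {v : ℝ} (hv : 0 < v) (alpha : ℝ) :
    ((v ^ 2 : ℝ)) ^ (-(alpha / 2)) = v ^ (-alpha) := by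
  rw [← Real.rpow_natCast v 2, ← Real.rpow_mul hv.le]
  norm_num
  rw [show -(2 * (alpha / 2)) = -alpha by ring]

lemma rpow_base_le {a b e : ℝ} (ha : 0 < a) (hab : a ≤ b) (he : e ≤ 0) : b ^ e ≤ a ^ e :=
  Real.rpow_le_rpow_of_nonpos ha hab he

section
variable {alpha eta tau x : ℝ}

lemma integrableOn_phi (halpha : 2 < alpha) (heta : 0 < eta) (htau : 0 < tau) (hx : 0 < x)
    {r : ℝ} (hr : 0 < r) {s : ℝ} (hs : 0 ≤ s) :
    IntegrableOn (fun u => phi alpha eta tau x r u) (Ioi s) := by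
  have hmeas := measurable_phi_u alpha eta tau x r
  have hIoi0 : IntegrableOn (fun u => phi alpha eta tau x r u) (Ioi 0) := by
    rw [← Set.Ioc_union_Ioi_eq_Ioi hr.le, integrableOn_union]
    constructor
    · refine Integrable.mono' (g := fun _ => (1:ℝ))
        (integrableOn_const measure_Ioc_lt_top.ne)
        hmeas.aestronglyMeasurable.restrict (ae_of_all _ fun u => ?_)
      rw [Real.norm_eq_abs, abs_of_nonneg (phi_nonneg heta htau hx r u)]
      exact phi_le_one heta htau hx r u
    · refine Integrable.mono'
        (g := fun u => tau * x ^ alpha * eta * u ^ (-alpha)) ?_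
        hmeas.aestronglyMeasurable.restrict ?_
      · exact (integrableOn_Ioi_rpow_of_lt (by linarith) hr).const_mul _
      · filter_upwards [ae_restrict_mem measurableSet_Ioi] with u hu
        rw [Real.norm_eq_abs, abs_of_nonneg (phi_nonneg heta htau hx r u)]
        calc phi alpha eta tau x r u
            ≤ tau * x ^ alpha * eta * (r ^ 2 + u ^ 2) ^ (-(alpha / 2)) :=
              phi_le_num heta htau hx r u
          _ ≤ tau * x ^ alpha * eta * u ^ (-alpha) := by
              have hu0 : (0:ℝ) < u := hr.trans hu
              have h1 : ((u:ℝ) ^ 2) ^ (-(alpha / 2)) = u ^ (-alpha) := sq_rpow hu0 alpha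
              have h2 : (r ^ 2 + u ^ 2 : ℝ) ^ (-(alpha / 2)) ≤ (u ^ 2 : ℝ) ^ (-(alpha / 2)) :=
                rpow_base_le (by positivity) (by nlinarith) (by linarith)
              have hc : (0:ℝ) ≤ tau * x ^ alpha * eta := by
                have := Real.rpow_pos_of_pos hx alpha; positivity
              rw [← h1]
              exact mul_le_mul_of_nonneg_left h2 hc
  exact hIoi0.mono_set (Set.Ioi_subset_Ioi hs)

lemma J_nonneg (heta : 0 < eta) (htau : 0 < tau) (hx : 0 < x) (r s : ℝ) :
    0 ≤ ∫ u in Ioi s, phi alpha eta tau x r u :=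
  setIntegral_nonneg measurableSet_Ioi fun u _ => phi_nonneg heta htau hx r u

lemma J_le (halpha : 2 < alpha) (heta : 0 < eta) (htau : 0 < tau) (hx : 0 < x)
    {r : ℝ} (hr : 0 < r) :
    ∫ u in Ioi (0:ℝ), phi alpha eta tau x r u ≤
      tau * x ^ alpha * eta * (1 + 1 / (alpha - 1)) * r ^ (1 - alpha) := by
  have hc : (0:ℝ) ≤ tau * x ^ alpha * eta := by
    have := Real.rpow_pos_of_pos hx alpha; positivity
  have hsplit : (Ioi (0:ℝ)) = Ioc 0 r ∪ Ioi r := (Set.Ioc_union_Ioi_eq_Ioi hr.le).symm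
  rw [hsplit, setIntegral_union (Set.Ioc_disjoint_Ioi le_rfl) measurableSet_Ioi
    ((integrableOn_phi halpha heta htau hx hr le_rfl).mono_set
      (by rw [hsplit]; exact Set.subset_union_left))
    ((integrableOn_phi halpha heta htau hx hr le_rfl).mono_set
      (by rw [hsplit]; exact Set.subset_union_right))]
  have h1 : ∫ u in Ioc (0:ℝ) r, phi alpha eta tau x r u ≤
      tau * x ^ alpha * eta * r ^ (1 - alpha) := by
    have hb : ∀ u ∈ Ioc (0:ℝ) r, phi alpha eta tau x r u ≤
        tau * x ^ alpha * eta * r ^ (-alpha) := by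
      intro u _
      calc phi alpha eta tau x r u
          ≤ tau * x ^ alpha * eta * (r ^ 2 + u ^ 2) ^ (-(alpha / 2)) :=
            phi_le_num heta htau hx r u
        _ ≤ tau * x ^ alpha * eta * r ^ (-alpha) := by
            rw [← sq_rpow hr alpha]
            exact mul_le_mul_of_nonneg_left
              (rpow_base_le (by positivity) (by nlinarith) (by linarith)) hc
    calc ∫ u in Ioc (0:ℝ) r, phi alpha eta tau x r u
        ≤ ∫ _u in Ioc (0:ℝ) r, tau * x ^ alpha * eta * r ^ (-alpha) := by
          refine setIntegral_mono_on ?_ (integrableOn_const measure_Ioc_lt_top.ne)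
            measurableSet_Ioc hb
          exact ((integrableOn_phi halpha heta htau hx hr le_rfl).mono_set
            (by rw [hsplit]; exact Set.subset_union_left))
      _ = r * (tau * x ^ alpha * eta * r ^ (-alpha)) := by
          rw [setIntegral_const, Real.volume_real_Ioc_of_le hr.le, smul_eq_mul, sub_zero]
      _ = tau * x ^ alpha * eta * r ^ (1 - alpha) := by
          rw [show (1 - alpha) = 1 + (-alpha) by ring, Real.rpow_add hr,
            Real.rpow_one]
          ring
  have h2 : ∫ u in Ioi r, phi alpha eta tau x r u ≤
      tau * x ^ alpha * eta * (1 / (alpha - 1)) * r ^ (1 - alpha) := by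
    calc ∫ u in Ioi r, phi alpha eta tau x r u
        ≤ ∫ u in Ioi r, tau * x ^ alpha * eta * u ^ (-alpha) := by
          refine setIntegral_mono_on
            ((integrableOn_phi halpha heta htau hx hr le_rfl).mono_set
              (by rw [hsplit]; exact Set.subset_union_right))
            ((integrableOn_Ioi_rpow_of_lt (by linarith) hr).const_mul _)
            measurableSet_Ioi ?_
          intro u hu
          have hu0 : (0:ℝ) < u := hr.trans hu
          calc phi alpha eta tau x r u
              ≤ tau * x ^ alpha * eta * (r ^ 2 + u ^ 2) ^ (-(alpha / 2)) :=
                phi_le_num heta htau hx r u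
            _ ≤ tau * x ^ alpha * eta * u ^ (-alpha) := by
                rw [← sq_rpow hu0 alpha]
                exact mul_le_mul_of_nonneg_left
                  (rpow_base_le (by positivity) (by nlinarith) (by linarith)) hc
      _ = tau * x ^ alpha * eta * (1 / (alpha - 1)) * r ^ (1 - alpha) := by
          rw [integral_const_mul, integral_Ioi_rpow_of_lt (by linarith) hr]
          rw [show (-alpha + 1) = 1 - alpha by ring]
          rw [show (1 - alpha) = -(alpha - 1) by ring, div_neg, neg_div, neg_neg]
          ring
  calc _ ≤ tau * x ^ alpha * eta * r ^ (1 - alpha)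
        + tau * x ^ alpha * eta * (1 / (alpha - 1)) * r ^ (1 - alpha) := add_le_add h1 h2
    _ = tau * x ^ alpha * eta * (1 + 1 / (alpha - 1)) * r ^ (1 - alpha) := by ring
end

section
variable {mu alpha eta tau x : ℝ}

lemma h_mono (halpha : 2 < alpha) (heta : 0 < eta) (htau : 0 < tau) (hx : 0 < x)
    (hmu : 0 < mu) {r s₁ s₂ : ℝ} (hr : 0 < r) (hs₁ : 0 ≤ s₁) (hs : s₁ ≤ s₂) :
    2 * mu * s₁ + 2 * mu * ∫ u in Ioi s₁, phi alpha eta tau x r u ≤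
      2 * mu * s₂ + 2 * mu * ∫ u in Ioi s₂, phi alpha eta tau x r u := by
  have hsplit : (Ioi s₁) = Ioc s₁ s₂ ∪ Ioi s₂ := (Set.Ioc_union_Ioi_eq_Ioi hs).symm
  have hint := integrableOn_phi halpha heta htau hx hr hs₁
  rw [hsplit] at hint
  have h12 : ∫ u in Ioc s₁ s₂, phi alpha eta tau x r u ≤ s₂ - s₁ := by
    calc ∫ u in Ioc s₁ s₂, phi alpha eta tau x r u
        ≤ ∫ _u in Ioc s₁ s₂, (1:ℝ) := by
          refine setIntegral_mono_on
            (hint.mono_set Set.subset_union_left)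
            (integrableOn_const measure_Ioc_lt_top.ne) measurableSet_Ioc
            fun u _ => phi_le_one heta htau hx r u
      _ = s₂ - s₁ := by
          rw [setIntegral_const, Real.volume_real_Ioc_of_le hs, smul_eq_mul, mul_one]
  have heq : ∫ u in Ioi s₁, phi alpha eta tau x r u =
      (∫ u in Ioc s₁ s₂, phi alpha eta tau x r u) + ∫ u in Ioi s₂, phi alpha eta tau x r u := by
    rw [hsplit]
    exact setIntegral_union (Set.Ioc_disjoint_Ioi le_rfl) measurableSet_Ioi
      (hint.mono_set Set.subset_union_left) (hint.mono_set Set.subset_union_right)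
  rw [heq]
  nlinarith [h12, hmu.le]

end

noncomputable def Gfun (mu alpha eta tau x rho r : ℝ) : ℝ :=
  1 - Real.exp (-2 * mu * Real.sqrt (rho ^ 2 - r ^ 2)
      - 2 * mu * ∫ u in Set.Ioi (Real.sqrt (rho ^ 2 - r ^ 2)), phi alpha eta tau x r u)

section
variable {mu alpha eta tau x : ℝ}

lemma Gfun_nonneg (heta : 0 < eta) (htau : 0 < tau) (hx : 0 < x) (hmu : 0 < mu)
    (rho r : ℝ) : 0 ≤ Gfun mu alpha eta tau x rho r := by
  have h1 : (0:ℝ) ≤ Real.sqrt (rho ^ 2 - r ^ 2) := Real.sqrt_nonneg _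
  have h2 := J_nonneg (alpha := alpha) heta htau hx r (Real.sqrt (rho ^ 2 - r ^ 2))
  have : -2 * mu * Real.sqrt (rho ^ 2 - r ^ 2)
      - 2 * mu * (∫ u in Ioi (Real.sqrt (rho ^ 2 - r ^ 2)), phi alpha eta tau x r u) ≤ 0 := by
    nlinarith
  have := Real.exp_le_one_iff.2 this
  unfold Gfun
  linarith

lemma Gfun_le_one (heta : 0 < eta) (htau : 0 < tau) (hx : 0 < x) (rho r : ℝ) :
    Gfun mu alpha eta tau x rho r ≤ 1 := by
  have := Real.exp_pos (-2 * mu * Real.sqrt (rho ^ 2 - r ^ 2)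
      - 2 * mu * ∫ u in Ioi (Real.sqrt (rho ^ 2 - r ^ 2)), phi alpha eta tau x r u)
  unfold Gfun
  linarith

lemma Gfun_mono (halpha : 2 < alpha) (heta : 0 < eta) (htau : 0 < tau) (hx : 0 < x)
    (hmu : 0 < mu) {rho₁ rho₂ r : ℝ} (hr : 0 < r) (h1 : 0 < rho₁) (h12 : rho₁ ≤ rho₂) :
    Gfun mu alpha eta tau x rho₁ r ≤ Gfun mu alpha eta tau x rho₂ r := by
  have hsle : Real.sqrt (rho₁ ^ 2 - r ^ 2) ≤ Real.sqrt (rho₂ ^ 2 - r ^ 2) :=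
    Real.sqrt_le_sqrt (by nlinarith)
  have hmono := h_mono halpha heta htau hx hmu hr (Real.sqrt_nonneg (rho₁ ^ 2 - r ^ 2)) hsle
  unfold Gfun
  have : Real.exp (-2 * mu * Real.sqrt (rho₂ ^ 2 - r ^ 2)
        - 2 * mu * ∫ u in Ioi (Real.sqrt (rho₂ ^ 2 - r ^ 2)), phi alpha eta tau x r u) ≤
      Real.exp (-2 * mu * Real.sqrt (rho₁ ^ 2 - r ^ 2)
        - 2 * mu * ∫ u in Ioi (Real.sqrt (rho₁ ^ 2 - r ^ 2)), phi alpha eta tau x r u) :=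
    Real.exp_le_exp.2 (by linarith)
  linarith

lemma measurable_Gfun (mu alpha eta tau x rho : ℝ) :
    Measurable (Gfun mu alpha eta tau x rho) := by
  have hs : Measurable fun r : ℝ => Real.sqrt (rho ^ 2 - r ^ 2) :=
    Real.continuous_sqrt.measurable.comp ((measurable_const.sub (measurable_id.pow_const 2)))
  have hF : Measurable fun p : ℝ × ℝ =>
      ({q : ℝ × ℝ | Real.sqrt (rho ^ 2 - q.1 ^ 2) < q.2}.indicator
        (fun q => phi alpha eta tau x q.1 q.2)) p := by
    refine Measurable.indicator (measurable_phi alpha eta tau x) ?_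
    exact measurableSet_lt (hs.comp measurable_fst) measurable_snd
  have hinner : Measurable fun r : ℝ =>
      ∫ u in Ioi (Real.sqrt (rho ^ 2 - r ^ 2)), phi alpha eta tau x r u := by
    have hsm := (hF.stronglyMeasurable.integral_prod_right' (ν := volume)).measurable
    have : (fun r : ℝ => ∫ u in Ioi (Real.sqrt (rho ^ 2 - r ^ 2)), phi alpha eta tau x r u)
        = fun r : ℝ => ∫ u, ({q : ℝ × ℝ | Real.sqrt (rho ^ 2 - q.1 ^ 2) < q.2}.indicator
            (fun q => phi alpha eta tau x q.1 q.2)) (r, u) := by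
      funext r
      rw [← integral_indicator measurableSet_Ioi]
      congr 1
    rw [this]
    exact hsm
  unfold Gfun
  exact measurable_const.sub
    (((measurable_const.mul hs).sub (measurable_const.mul hinner)).exp)

end

lemma one_sub_exp_neg_le (y : ℝ) : 1 - Real.exp (-y) ≤ y := by
  nlinarith [Real.add_one_le_exp (-y)]

section
variable {mu alpha eta tau x rho : ℝ}

lemma integrableOn_Gfun_Ioc (heta : 0 < eta) (htau : 0 < tau) (hx : 0 < x) (hmu : 0 < mu)
    (a b : ℝ) : IntegrableOn (Gfun mu alpha eta tau x rho) (Ioc a b) := by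
  refine Integrable.mono' (g := fun _ => (1:ℝ))
    (integrableOn_const measure_Ioc_lt_top.ne)
    (measurable_Gfun mu alpha eta tau x rho).aestronglyMeasurable.restrict
    (ae_of_all _ fun r => ?_)
  rw [Real.norm_eq_abs, abs_of_nonneg (Gfun_nonneg heta htau hx hmu rho r)]
  exact Gfun_le_one heta htau hx rho r

lemma integrableOn_Gfun_Ioi (halpha : 2 < alpha) (heta : 0 < eta) (htau : 0 < tau)
    (hx : 0 < x) (hmu : 0 < mu) (hrho : 0 < rho) :
    IntegrableOn (Gfun mu alpha eta tau x rho) (Ioi rho) := by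
  refine Integrable.mono'
    (g := fun r => 2 * mu * (tau * x ^ alpha * eta * (1 + 1 / (alpha - 1))) * r ^ (1 - alpha))
    ((integrableOn_Ioi_rpow_of_lt (by linarith) hrho).const_mul _)
    (measurable_Gfun mu alpha eta tau x rho).aestronglyMeasurable.restrict ?_
  filter_upwards [ae_restrict_mem measurableSet_Ioi] with r hr
  have hr0 : (0:ℝ) < r := hrho.trans hr
  have hrr : rho < r := hr
  have hsq : Real.sqrt (rho ^ 2 - r ^ 2) = 0 := Real.sqrt_eq_zero'.2 (by nlinarith)
  rw [Real.norm_eq_abs, abs_of_nonneg (Gfun_nonneg heta htau hx hmu rho r)]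
  have hJle := J_le halpha heta htau hx hr0
  have hGle : Gfun mu alpha eta tau x rho r ≤
      2 * mu * ∫ u in Ioi (0:ℝ), phi alpha eta tau x r u := by
    unfold Gfun
    rw [hsq]
    have h1 : -2 * mu * (0:ℝ) - 2 * mu * (∫ u in Ioi (0:ℝ), phi alpha eta tau x r u) =
        -(2 * mu * ∫ u in Ioi (0:ℝ), phi alpha eta tau x r u) := by ring
    rw [h1]
    exact one_sub_exp_neg_le _
  calc Gfun mu alpha eta tau x rho r
      ≤ 2 * mu * ∫ u in Ioi (0:ℝ), phi alpha eta tau x r u := hGle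
    _ ≤ 2 * mu * (tau * x ^ alpha * eta * (1 + 1 / (alpha - 1)) * r ^ (1 - alpha)) :=
        mul_le_mul_of_nonneg_left hJle (by linarith)
    _ = 2 * mu * (tau * x ^ alpha * eta * (1 + 1 / (alpha - 1))) * r ^ (1 - alpha) := by ring

lemma integrableOn_Gfun_Ioi0 (halpha : 2 < alpha) (heta : 0 < eta) (htau : 0 < tau)
    (hx : 0 < x) (hmu : 0 < mu) (hrho : 0 < rho) :
    IntegrableOn (Gfun mu alpha eta tau x rho) (Ioi 0) := by
  rw [← Set.Ioc_union_Ioi_eq_Ioi hrho.le, integrableOn_union]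
  exact ⟨integrableOn_Gfun_Ioc heta htau hx hmu 0 rho,
    integrableOn_Gfun_Ioi halpha heta htau hx hmu hrho⟩

lemma K2_eq (hrho : 0 < rho) :
    K2 mu rho alpha eta tau x = ∫ r in Ioc (0:ℝ) rho, Gfun mu alpha eta tau x rho r := by
  rw [K2, intervalIntegral.integral_of_le hrho.le]
  rfl

lemma K3_eq (hrho : 0 < rho) :
    K3 mu rho alpha eta tau x = ∫ r in Ioi rho, Gfun mu alpha eta tau x rho r := by
  rw [K3]
  refine setIntegral_congr_fun measurableSet_Ioi fun r hr => ?_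
  have hsq : Real.sqrt (rho ^ 2 - r ^ 2) = 0 := Real.sqrt_eq_zero'.2
    (by have : rho < r := hr; nlinarith)
  unfold Gfun phi
  rw [hsq]
  norm_num

lemma S_eq (halpha : 2 < alpha) (heta : 0 < eta) (htau : 0 < tau)
    (hx : 0 < x) (hmu : 0 < mu) (hrho : 0 < rho) :
    K2 mu rho alpha eta tau x + K3 mu rho alpha eta tau x =
      ∫ r in Ioi (0:ℝ), Gfun mu alpha eta tau x rho r := by
  rw [K2_eq hrho, K3_eq hrho, ← Set.Ioc_union_Ioi_eq_Ioi hrho.le,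
    setIntegral_union (Set.Ioc_disjoint_Ioi le_rfl) measurableSet_Ioi
      (integrableOn_Gfun_Ioc heta htau hx hmu 0 rho)
      (integrableOn_Gfun_Ioi halpha heta htau hx hmu hrho)]

lemma S_mono (halpha : 2 < alpha) (heta : 0 < eta) (htau : 0 < tau)
    (hx : 0 < x) (hmu : 0 < mu) {rho₁ rho₂ : ℝ} (h1 : 0 < rho₁) (h12 : rho₁ ≤ rho₂) :
    K2 mu rho₁ alpha eta tau x + K3 mu rho₁ alpha eta tau x ≤
      K2 mu rho₂ alpha eta tau x + K3 mu rho₂ alpha eta tau x := by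
  rw [S_eq halpha heta htau hx hmu h1, S_eq halpha heta htau hx hmu (h1.trans_le h12)]
  refine setIntegral_mono_on
    (integrableOn_Gfun_Ioi0 halpha heta htau hx hmu h1)
    (integrableOn_Gfun_Ioi0 halpha heta htau hx hmu (h1.trans_le h12))
    measurableSet_Ioi fun r hr => Gfun_mono halpha heta htau hx hmu hr h1 h12

end

lemma measurable_K1 (tau alpha : ℝ) : Measurable (K1 tau alpha) := by
  have hpsi : Measurable fun p : ℝ × ℝ =>
      tau * p.1 ^ alpha * p.2 ^ (1 - alpha) / (1 + tau * p.1 ^ alpha * p.2 ^ (-alpha)) := by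
    refine Measurable.div ?_ (measurable_const.add ?_)
    · exact (measurable_const.mul (measurable_fst.pow_const alpha)).mul
        (measurable_snd.pow_const _)
    · exact (measurable_const.mul (measurable_fst.pow_const alpha)).mul
        (measurable_snd.pow_const _)
  have hF : Measurable fun p : ℝ × ℝ =>
      ({q : ℝ × ℝ | q.1 < q.2}.indicator (fun q : ℝ × ℝ =>
        tau * q.1 ^ alpha * q.2 ^ (1 - alpha) / (1 + tau * q.1 ^ alpha * q.2 ^ (-alpha)))) p :=
    hpsi.indicator (measurableSet_lt measurable_fst measurable_snd)
  have hint : Measurable fun x : ℝ => ∫ r in Set.Ioi x,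
      tau * x ^ alpha * r ^ (1 - alpha) / (1 + tau * x ^ alpha * r ^ (-alpha)) := by
    have hsm := (hF.stronglyMeasurable.integral_prod_right' (ν := volume)).measurable
    have heq : (fun x : ℝ => ∫ r in Set.Ioi x,
        tau * x ^ alpha * r ^ (1 - alpha) / (1 + tau * x ^ alpha * r ^ (-alpha)))
        = fun x : ℝ => ∫ r, ({q : ℝ × ℝ | q.1 < q.2}.indicator (fun q : ℝ × ℝ =>
            tau * q.1 ^ alpha * q.2 ^ (1 - alpha) /
              (1 + tau * q.1 ^ alpha * q.2 ^ (-alpha)))) (x, r) := by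
      funext x
      rw [← integral_indicator measurableSet_Ioi]
      congr 1
    rw [heq]
    exact hsm
  unfold K1
  exact (measurable_id.pow_const 2).add (measurable_const.mul hint)

section
variable {mu alpha eta tau rho : ℝ}

lemma measurable_Gfun_pair (mu alpha eta tau rho : ℝ) :
    Measurable fun p : ℝ × ℝ => Gfun mu alpha eta tau p.1 rho p.2 := by
  have hs : Measurable fun r : ℝ => Real.sqrt (rho ^ 2 - r ^ 2) :=
    Real.continuous_sqrt.measurable.comp (measurable_const.sub (measurable_id.pow_const 2))
  have hF : Measurable fun q : (ℝ × ℝ) × ℝ =>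
      ({q : (ℝ × ℝ) × ℝ | Real.sqrt (rho ^ 2 - q.1.2 ^ 2) < q.2}.indicator
        (fun q : (ℝ × ℝ) × ℝ => phi alpha eta tau q.1.1 q.1.2 q.2)) q :=
    (measurable_phi_all alpha eta tau).indicator
      (measurableSet_lt (hs.comp measurable_fst.snd) measurable_snd)
  have hinner : Measurable fun p : ℝ × ℝ =>
      ∫ u in Set.Ioi (Real.sqrt (rho ^ 2 - p.2 ^ 2)), phi alpha eta tau p.1 p.2 u := by
    have hsm := (hF.stronglyMeasurable.integral_prod_right' (ν := volume)).measurable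
    have heq : (fun p : ℝ × ℝ =>
        ∫ u in Set.Ioi (Real.sqrt (rho ^ 2 - p.2 ^ 2)), phi alpha eta tau p.1 p.2 u)
        = fun p : ℝ × ℝ => ∫ u,
          ({q : (ℝ × ℝ) × ℝ | Real.sqrt (rho ^ 2 - q.1.2 ^ 2) < q.2}.indicator
            (fun q : (ℝ × ℝ) × ℝ => phi alpha eta tau q.1.1 q.1.2 q.2)) (p, u) := by
      funext p
      rw [← integral_indicator measurableSet_Ioi]
      congr 1
    rw [heq]
    exact hsm
  unfold Gfun
  exact measurable_const.sub
    (((measurable_const.mul (hs.comp measurable_snd)).sub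
      (measurable_const.mul hinner)).exp)

lemma measurable_K2 (hrho : 0 < rho) :
    Measurable fun x : ℝ => K2 mu rho alpha eta tau x := by
  have heq : (fun x : ℝ => K2 mu rho alpha eta tau x)
      = fun x : ℝ => ∫ r, Gfun mu alpha eta tau x rho r
          ∂(volume.restrict (Set.Ioc 0 rho)) :=
    funext fun x => K2_eq hrho
  rw [heq]
  exact ((measurable_Gfun_pair mu alpha eta tau rho).stronglyMeasurable.integral_prod_right'
    (ν := volume.restrict (Set.Ioc 0 rho))).measurable

lemma measurable_K3 (hrho : 0 < rho) :
    Measurable fun x : ℝ => K3 mu rho alpha eta tau x := by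
  have heq : (fun x : ℝ => K3 mu rho alpha eta tau x)
      = fun x : ℝ => ∫ r, Gfun mu alpha eta tau x rho r
          ∂(volume.restrict (Set.Ioi rho)) :=
    funext fun x => K3_eq hrho
  rw [heq]
  exact ((measurable_Gfun_pair mu alpha eta tau rho).stronglyMeasurable.integral_prod_right'
    (ν := volume.restrict (Set.Ioi rho))).measurable

lemma K2_nonneg (heta : 0 < eta) (htau : 0 < tau) {x : ℝ} (hx : 0 < x) (hmu : 0 < mu)
    (hrho : 0 < rho) : 0 ≤ K2 mu rho alpha eta tau x := by
  rw [K2_eq hrho]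
  exact setIntegral_nonneg measurableSet_Ioc fun r _ => Gfun_nonneg heta htau hx hmu rho r

lemma K3_nonneg (heta : 0 < eta) (htau : 0 < tau) {x : ℝ} (hx : 0 < x) (hmu : 0 < mu)
    (hrho : 0 < rho) : 0 ≤ K3 mu rho alpha eta tau x := by
  rw [K3_eq hrho]
  exact setIntegral_nonneg measurableSet_Ioi fun r _ => Gfun_nonneg heta htau hx hmu rho r

end

lemma K1_ge {tau alpha x : ℝ} (htau : 0 < tau) (hx : 0 < x) :
    x ^ 2 ≤ K1 tau alpha x := by
  have h : 0 ≤ ∫ r in Set.Ioi x,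
      tau * x ^ alpha * r ^ (1 - alpha) / (1 + tau * x ^ alpha * r ^ (-alpha)) := by
    refine setIntegral_nonneg measurableSet_Ioi fun r hr => ?_
    have hr0 : 0 < r := hx.trans hr
    have h1 : (0:ℝ) < x ^ alpha := Real.rpow_pos_of_pos hx _
    have h2 : (0:ℝ) < r ^ (1 - alpha) := Real.rpow_pos_of_pos hr0 _
    have h3 : (0:ℝ) < r ^ (-alpha) := Real.rpow_pos_of_pos hr0 _
    positivity
  unfold K1
  linarith

theorem downlink_coverage_antitone_in_rho (lamB lamL mu alpha eta tau : ℝ)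
    (hlamB : 0 < lamB) (hlamL : 0 < lamL) (hmu : 0 < mu)
    (halpha : 2 < alpha) (heta : 0 < eta) (htau : 0 < tau) :
    ∀ rho₁ rho₂ : ℝ, 0 < rho₁ → rho₁ ≤ rho₂ →
      C_DL lamB lamL mu rho₂ alpha eta tau ≤ C_DL lamB lamL mu rho₁ alpha eta tau := by
  intro rho₁ rho₂ h1 h12
  have h2 : 0 < rho₂ := h1.trans_le h12
  have hpi := Real.pi_pos
  unfold C_DL
  refine integral_mono_of_nonneg ?_ ?_ ?_
  · -- nonnegativity of the rho₂ integrand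
    filter_upwards [ae_restrict_mem measurableSet_Ioi] with x hx
    have hx0 : (0:ℝ) < x := hx
    positivity
  · -- integrability of the rho₁ integrand
    refine Integrable.mono'
      (g := fun x => 2 * Real.pi * lamB * (x * Real.exp (-(Real.pi * lamB) * x ^ 2))) ?_ ?_ ?_
    · exact ((integrable_mul_exp_neg_mul_sq (by positivity)).const_mul _).restrict
    · refine Measurable.aestronglyMeasurable ?_
      refine ((measurable_const.mul measurable_id).mul ?_)
      refine Measurable.exp ?_
      exact ((measurable_const.mul (measurable_K1 tau alpha)).neg.sub
          (measurable_const.mul (measurable_K2 h1))).sub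
        (measurable_const.mul (measurable_K3 h1))
    · filter_upwards [ae_restrict_mem measurableSet_Ioi] with x hx
      have hx0 : (0:ℝ) < x := hx
      have hK1 := K1_ge (alpha := alpha) htau hx0
      have hK2 := K2_nonneg (alpha := alpha) heta htau hx0 hmu h1
      have hK3 := K3_nonneg (alpha := alpha) heta htau hx0 hmu h1
      have hle : -(Real.pi * lamB * K1 tau alpha x) - 2 * lamL * K2 mu rho₁ alpha eta tau x
          - 2 * lamL * K3 mu rho₁ alpha eta tau x ≤ -(Real.pi * lamB) * x ^ 2 := by
        nlinarith [mul_le_mul_of_nonneg_left hK1 (le_of_lt (mul_pos hpi hlamB)),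
          mul_nonneg hlamL.le hK2, mul_nonneg hlamL.le hK3]
      rw [Real.norm_eq_abs, abs_of_nonneg (by positivity)]
      calc 2 * Real.pi * lamB * x *
            Real.exp (-(Real.pi * lamB * K1 tau alpha x)
              - 2 * lamL * K2 mu rho₁ alpha eta tau x
              - 2 * lamL * K3 mu rho₁ alpha eta tau x)
          ≤ 2 * Real.pi * lamB * x * Real.exp (-(Real.pi * lamB) * x ^ 2) :=
            mul_le_mul_of_nonneg_left (Real.exp_le_exp.2 hle) (by positivity)
        _ = 2 * Real.pi * lamB * (x * Real.exp (-(Real.pi * lamB) * x ^ 2)) := by ring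
  · -- pointwise comparison
    filter_upwards [ae_restrict_mem measurableSet_Ioi] with x hx
    have hx0 : (0:ℝ) < x := hx
    have hS := S_mono halpha heta htau hx0 hmu h1 h12
    refine mul_le_mul_of_nonneg_left (Real.exp_le_exp.2 (by nlinarith)) (by positivity)
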